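/- For the matrix T⁰ as above, the row vector v^{(j)} with entries v^{(j)}(r) = (-1)^{r-j} C(k-j, r-j) for j ≤ r ≤ k and 0 for r < j satisfies v^{(j)} T⁰ = (j/k) v^{(j)}. -/

import Mathlib

/-- The non-perturbed matrix `T⁰`: bidiagonal with `(T⁰)_{j,j} = j/k`,
`(T⁰)_{j,ℓ} = 1 - j/k` on the other nonzero diagonal (`ℓ` adjacent to `j`), else `0`. -/
noncomputable def T0 (k : ℕ) : Matrix (Fin (k + 1)) (Fin (k + 1)) ℝ :=
  fun j l => if j = l then (j : ℝ) / k else if (l : ℕ) = (j : ℕ) + 1 then 1 - (j : ℝ) / k else 0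

noncomputable def vj (k j : ℕ) : Fin (k + 1) → ℝ := fun r =>
  if j ≤ (r : ℕ) then (-1 : ℝ) ^ ((r : ℕ) - j) * (Nat.choose (k - j) ((r : ℕ) - j) : ℝ) else 0

/-- The row vector `v^{(j)}` with `v^{(j)}(r) = (-1)^{r-j} C(k-j, r-j)` for `j ≤ r ≤ k`
and `0` for `r < j` is a left eigenvector of `T⁰` with eigenvalue `j/k`. -/
theorem T0_left_eigenvector (k j : ℕ) (hk : 1 ≤ k) (hj : j ≤ k) :
    Matrix.vecMul
        (fun r : Fin (k + 1) =>
          if j ≤ (r : ℕ) then (-1 : ℝ) ^ ((r : ℕ) - j) * (Nat.choose (k - j) ((r : ℕ) - j) : ℝ)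
          else 0)
        (T0 k) =
      ((j : ℝ) / k) •
        (fun r : Fin (k + 1) =>
          if j ≤ (r : ℕ) then (-1 : ℝ) ^ ((r : ℕ) - j) * (Nat.choose (k - j) ((r : ℕ) - j) : ℝ)
          else 0) := by
  show Matrix.vecMul (vj k j) (T0 k) = ((j : ℝ) / k) • (vj k j)
  funext l
  have key : ∀ r : Fin (k+1), vj k j r * T0 k r l =
      (if r = l then vj k j l * ((l:ℝ)/k) else 0)
      + (if (l:ℕ) = (r:ℕ)+1 then vj k j r * (1 - (r:ℝ)/k) else 0) := by
    intro r
    unfold T0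
    by_cases h1 : r = l
    · subst h1
      simp [Nat.succ_ne_self]
      try ring
    · simp only [h1, if_false]
      by_cases h2 : (l:ℕ) = (r:ℕ)+1
      · simp [h2]
      · simp [h2]
  simp only [Matrix.vecMul, dotProduct, key, Finset.sum_add_distrib,
    Finset.sum_ite_eq' Finset.univ l, Finset.mem_univ, if_true, Pi.smul_apply, smul_eq_mul]
  rcases Nat.eq_zero_or_eq_succ_pred (l:ℕ) with h0 | hm
  · have : ∀ r : Fin (k+1), ((l:ℕ) = (r:ℕ)+1) = False := by
      intro r; simp [h0]
    simp only [this, if_false, Finset.sum_const_zero, add_zero]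
    unfold vj
    rcases Nat.eq_zero_or_pos j with hj0 | hj0
    · subst hj0; simp [h0]
    · simp [h0, Nat.not_le.mpr hj0]
  · set m := (l:ℕ) - 1 with hmdef
    have hlm : (l:ℕ) = m + 1 := hm
    have hmk : m + 1 ≤ k := by have := l.isLt; omega
    set r0 : Fin (k+1) := ⟨m, by omega⟩ with hr0
    have hcond : ∀ r : Fin (k+1), ((l:ℕ) = (r:ℕ)+1) ↔ r = r0 := by
      intro r
      constructor
      · intro h; apply Fin.ext; simp [hr0]; omega
      · intro h; subst h; simp [hr0, hlm]
    simp only [hcond]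
    rw [Finset.sum_ite_eq' Finset.univ r0]
    simp only [Finset.mem_univ, if_true]
    have hr0v : (r0:ℕ) = m := rfl
    unfold vj
    simp only [hr0v, hlm]
    have hk' : (k:ℝ) ≠ 0 := Nat.cast_ne_zero.mpr (by omega)
    rcases lt_trichotomy j (m+1) with hlt | heq | hgt
    · have hjm : j ≤ m := by omega
      simp only [if_pos (by omega : j ≤ m + 1), if_pos hjm]
      have hid : (Nat.choose (k-j) (m-j+1) : ℝ) * ((m:ℝ) - j + 1) =
          (Nat.choose (k-j) (m-j) : ℝ) * ((k:ℝ) - m) := by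
        have h1 := Nat.choose_succ_right_eq (k-j) (m-j)
        have h2 : (k-j) - (m-j) = k - m := by omega
        rw [h2] at h1
        have hcast := congrArg (Nat.cast : ℕ → ℝ) h1
        push_cast [Nat.cast_sub hjm, Nat.cast_sub (show m ≤ k by omega)] at hcast
        linarith [hcast]
      have hms : m + 1 - j = (m - j) + 1 := by omega
      rw [hms, pow_succ]
      push_cast
      field_simp
      linear_combination (-1:ℝ) * hid
    · rw [← heq]
      simp only [le_refl, if_pos, Nat.sub_self, pow_zero, Nat.choose_zero_right,
        if_neg (by omega : ¬ j ≤ m)]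
      simp
      try ring
    · rw [if_neg (by omega : ¬ j ≤ m + 1), if_neg (by omega : ¬ j ≤ m)]
      simp
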